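/- Let Q be a commutative loop satisfying identity (A) in which every associator lies in the center Z(Q), and let a, b ∈ Q. Then there exists a unique map φ : F̂ → Q such that φ(u·v) = φ(u)·φ(v) for all u, v ∈ F̂, φ(1,0,0,0) = a, and φ(0,1,0,0) = b. (F̂ is the free commutative automorphic loop of nilpotency class two on two generators.) -/

import Mathlib

/-- The multiplication of the loop `F̂` on `ℤ⁴`. -/
def hatMul : ℤ × ℤ × ℤ × ℤ → ℤ × ℤ × ℤ × ℤ → ℤ × ℤ × ℤ × ℤ
  | (a1, a2, a3, a4), (b1, b2, b3, b4) =>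
    (a1 + b1, a2 + b2, a3 + b3 - a1 * b1 * (a2 + b2), a4 + b4 + a2 * b2 * (a1 + b1))


class CAL (Q : Type*) extends Mul Q, One Q where
  ld : Q → Q → Q
  asc : Q → Q → Q → Q
  hone_mul : ∀ a : Q, 1 * a = a
  hmul_one : ∀ a : Q, a * 1 = a
  hcomm : ∀ a b : Q, a * b = b * a
  hmul_ld : ∀ a b : Q, a * ld a b = b
  hld_mul : ∀ a b : Q, ld a (a * b) = b
  hA : ∀ x y s t : Q, ld (y * x) (y * (x * (s * t))) =
      ld (y * x) (y * (x * s)) * ld (y * x) (y * (x * t))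
  hasc : ∀ a b c : Q, (a * b) * c = (a * (b * c)) * asc a b c
  hcen : ∀ a b c u v : Q, (asc a b c * u) * v = asc a b c * (u * v)

namespace CAL

variable {Q : Type*} [CAL Q]

lemma cancel {x u v : Q} (h : x * u = x * v) : u = v := by
  have h2 := congrArg (ld x) h
  rwa [hld_mul, hld_mul] at h2

lemma cancelr {u v x : Q} (h : u * x = v * x) : u = v := by
  apply cancel (x := x); rwa [hcomm x u, hcomm x v]

lemma eq_one_of {u k : Q} (h : u * k = u) : k = 1 :=
  cancel (x := u) (h.trans (hmul_one u).symm)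

def inv (x : Q) : Q := ld x 1

lemma mul_inv (x : Q) : x * inv x = 1 := hmul_ld x 1
lemma inv_mul (x : Q) : inv x * x = 1 := by rw [hcomm]; exact mul_inv x
lemma inv_unique {x t : Q} (h : x * t = 1) : t = inv x := by
  have h2 := congrArg (ld x) h
  rwa [hld_mul] at h2
lemma inv_inv (x : Q) : inv (inv x) = x := (inv_unique (inv_mul x)).symm
lemma inv_one : inv (1 : Q) = 1 := (inv_unique (hmul_one 1)).symm

def IsC (z : Q) : Prop := ∀ u v : Q, (z * u) * v = z * (u * v)

lemma IsC.mid {z : Q} (hz : IsC z) (u v : Q) : u * (z * v) = z * (u * v) := by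
  rw [hcomm u (z * v), hz, hcomm v u]
lemma IsC.pull {z : Q} (hz : IsC z) (u v : Q) : (u * z) * v = (u * v) * z := by
  rw [hcomm u z, hz, hcomm z (u * v)]
lemma IsC.pullr {z : Q} (hz : IsC z) (u v : Q) : u * (v * z) = (u * v) * z := by
  rw [hcomm v z, hz.mid, hcomm z (u * v)]
lemma IsC.assocr {z : Q} (hz : IsC z) (u v : Q) : (u * v) * z = u * (v * z) :=
  (hz.pullr u v).symm
lemma IsC.merge {k : Q} (hk : IsC k) (x l : Q) : (x * k) * l = x * (k * l) := by
  rw [hcomm x k, hk, hk.mid]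

lemma IsC.one : IsC (1 : Q) := fun u v => by rw [hone_mul, hone_mul]
lemma IsC.mul' {z w : Q} (hz : IsC z) (hw : IsC w) : IsC (z * w) := fun u v => by
  rw [hz w u, hz (w * u) v, hw u v, ← hz w (u * v)]
lemma IsC.inv' {z : Q} (hz : IsC z) : IsC (inv z) := by
  intro u v
  apply cancel (x := z)
  calc z * ((inv z * u) * v) = (z * (inv z * u)) * v := (hz _ _).symm
    _ = ((z * inv z) * u) * v := by rw [hz (inv z) u]
    _ = u * v := by rw [mul_inv, hone_mul]
    _ = (z * inv z) * (u * v) := by rw [mul_inv, hone_mul]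
    _ = z * (inv z * (u * v)) := hz _ _

lemma unasc {X Y k : Q} (hk : IsC k) (h : X * k = Y) : X = Y * inv k := by
  rw [← h, hk.merge, mul_inv, hmul_one]

lemma inv_distrib {k l : Q} (hk : IsC k) (hl : IsC l) :
    inv (k * l) = inv k * inv l := by
  refine (inv_unique ?_).symm
  calc (k * l) * (inv k * inv l) = k * (l * (inv k * inv l)) := hk _ _
    _ = k * (inv k * (l * inv l)) := by rw [hk.inv'.mid l (inv l)]
    _ = k * (inv k * 1) := by rw [mul_inv]
    _ = 1 := by rw [hmul_one, mul_inv]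

lemma IsC_asc (x y z : Q) : IsC (asc x y z) := fun u v => hcen x y z u v

lemma asc_one3 (x y : Q) : asc x y 1 = 1 := by
  have h := hasc x y 1
  rw [hmul_one, hmul_one] at h
  exact eq_one_of h.symm

lemma asc_xyx (x y : Q) : asc x y x = 1 := by
  have h := hasc x y x
  rw [hcomm y x, hcomm (x * y) x] at h
  exact eq_one_of h.symm

lemma ldval (y x t : Q) : ld (y * x) (y * (x * t)) = t * inv (asc y x t) := by
  have h1 : y * (x * t) = ((y * x) * t) * inv (asc y x t) :=
    unasc (IsC_asc y x t) (hasc y x t).symm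
  rw [h1, (IsC_asc y x t).inv'.assocr, hld_mul]

lemma mulmul {α β : Q} (ha : IsC α) (hb : IsC β) (s t : Q) :
    (s * α) * (t * β) = (s * t) * (α * β) := by
  rw [hb.pullr, ha.pull, ha.merge]

lemma lin3 (y x s t : Q) : asc y x (s * t) = asc y x s * asc y x t := by
  have h := hA x y s t
  rw [ldval, ldval, ldval,
    mulmul ((IsC_asc y x s).inv') ((IsC_asc y x t).inv')] at h
  have h2 := cancel h
  have h3 : inv (asc y x (s * t)) = inv (asc y x s * asc y x t) := by
    rw [h2, inv_distrib (IsC_asc y x s) (IsC_asc y x t)]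
  have h4 := congrArg inv h3
  rwa [inv_inv, inv_inv] at h4

lemma skew (x y z : Q) : asc z y x = inv (asc x y z) := by
  have h : x * (y * z) = (x * (y * z)) * (asc x y z * asc z y x) := by
    calc x * (y * z) = (z * y) * x := by rw [hcomm z y, hcomm (y * z) x]
      _ = (z * (y * x)) * asc z y x := hasc z y x
      _ = ((x * y) * z) * asc z y x := by rw [hcomm y x, hcomm z (x * y)]
      _ = ((x * (y * z)) * asc x y z) * asc z y x := by rw [hasc x y z]
      _ = (x * (y * z)) * (asc x y z * asc z y x) := (IsC_asc x y z).merge _ _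
  exact inv_unique (eq_one_of h.symm)

lemma jac (x y z : Q) : asc x y z = inv (asc y z x * asc z x y) := by
  have h : (x * (y * z)) * asc x y z
      = (x * (y * z)) * (inv (asc y z x) * inv (asc z x y)) := by
    calc (x * (y * z)) * asc x y z = (x * y) * z := (hasc x y z).symm
      _ = z * (x * y) := hcomm _ _
      _ = ((z * x) * y) * inv (asc z x y) := unasc (IsC_asc z x y) (hasc z x y).symm
      _ = (y * (z * x)) * inv (asc z x y) := by rw [hcomm (z * x) y]
      _ = (((y * z) * x) * inv (asc y z x)) * inv (asc z x y) := by
            rw [unasc (IsC_asc y z x) (hasc y z x).symm]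
      _ = ((x * (y * z)) * inv (asc y z x)) * inv (asc z x y) := by
            rw [hcomm (y * z) x]
      _ = (x * (y * z)) * (inv (asc y z x) * inv (asc z x y)) :=
            ((IsC_asc y z x).inv').merge _ _
  have h2 := cancel h
  rw [h2, ← inv_distrib (IsC_asc y z x) (IsC_asc z x y)]

lemma lin1 (s t y z : Q) : asc (s * t) y z = asc s y z * asc t y z := by
  have h1 : asc (s * t) y z = inv (asc z y (s * t)) := by
    rw [skew (s * t) y z, inv_inv]
  rw [h1, lin3, inv_distrib (IsC_asc z y s) (IsC_asc z y t),
    show inv (asc z y s) = asc s y z from by rw [skew s y z, inv_inv],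
    show inv (asc z y t) = asc t y z from by rw [skew t y z, inv_inv]]

lemma swap_mid {p r : Q} (hp : IsC p) (hr : IsC r) (q s : Q) :
    (p * q) * (r * s) = (p * r) * (q * s) := by
  rw [hp q (r * s), hr.mid q s, ← hp r (q * s)]

lemma lin2 (x s t z : Q) : asc x (s * t) z = asc x s z * asc x t z := by
  rw [jac x (s * t) z, lin1, lin3,
    swap_mid (IsC_asc s z x) (IsC_asc z x s) _ _,
    inv_distrib ((IsC_asc s z x).mul' (IsC_asc z x s))
      ((IsC_asc t z x).mul' (IsC_asc z x t)),
    jac x s z, jac x t z]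

lemma asc_inv3 (y x t : Q) : asc y x (inv t) = inv (asc y x t) := by
  have h : asc y x t * asc y x (inv t) = 1 := by
    rw [← lin3, mul_inv, asc_one3]
  exact inv_unique h


def npow (x : Q) : ℕ → Q
  | 0 => 1
  | n+1 => npow x n * x

def zp (x : Q) : ℤ → Q
  | Int.ofNat n => npow x n
  | Int.negSucc n => npow (inv x) (n+1)

lemma zp_zero (x : Q) : zp x 0 = 1 := rfl
lemma zp_one' (x : Q) : zp x 1 = x := hone_mul x

lemma v_npow {x y s : Q} (hbase : asc x y s = 1) : ∀ n, asc x y (npow s n) = 1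
  | 0 => asc_one3 x y
  | n+1 => by
      show asc x y (npow s n * s) = 1
      rw [lin3, v_npow hbase n, hbase, hmul_one]

lemma asc_inv_base (x y : Q) : asc x y (inv x) = 1 := by
  have h := lin3 x y x (inv x)
  rw [mul_inv, asc_one3, asc_xyx, hone_mul] at h
  exact h.symm

lemma vP1 (x y : Q) (n : ℕ) : asc x y (npow x n) = 1 := v_npow (asc_xyx x y) n
lemma vP2 (x y : Q) (n : ℕ) : asc x y (npow (inv x) n) = 1 := v_npow (asc_inv_base x y) n

lemma asc_inv_base' (x y : Q) : asc (inv x) y x = 1 := by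
  rw [skew x y (inv x), asc_inv_base, inv_one]

lemma vP3 (x y : Q) (n : ℕ) : asc (inv x) y (npow x n) = 1 := v_npow (asc_inv_base' x y) n
lemma vP4 (x y : Q) (n : ℕ) : asc (inv x) y (npow (inv x) n) = 1 := v_npow (asc_xyx (inv x) y) n

lemma vL1 (x y : Q) (n : ℤ) : asc x y (zp x n) = 1 := by
  cases n with
  | ofNat k => exact vP1 x y k
  | negSucc k => exact vP2 x y (k+1)

lemma vL2 (x y : Q) (n : ℤ) : asc (inv x) y (zp x n) = 1 := by
  cases n with
  | ofNat k => exact vP3 x y k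
  | negSucc k => exact vP4 x y (k+1)

lemma vR1 (x y : Q) (n : ℤ) : asc (zp x n) y x = 1 := by
  rw [skew x y (zp x n), vL1, inv_one]

lemma vR2 (x y : Q) (n : ℤ) : asc (zp x n) y (inv x) = 1 := by
  rw [skew (inv x) y (zp x n), vL2, inv_one]

lemma npow_inv_mul_x (x : Q) (n : ℕ) : npow (inv x) (n+1) * x = npow (inv x) n := by
  have h := hasc (npow (inv x) n) (inv x) x
  rw [inv_mul, hmul_one] at h
  have h2 : asc (npow (inv x) n) (inv x) x = 1 := by
    rw [skew x (inv x) (npow (inv x) n), vP2 x (inv x) n, inv_one]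
  rw [show npow (inv x) (n+1) = npow (inv x) n * inv x from rfl, h, h2, hmul_one]

lemma npow_mul_inv (x : Q) (n : ℕ) : npow x (n+1) * inv x = npow x n := by
  have h := hasc (npow x n) x (inv x)
  rw [mul_inv, hmul_one] at h
  have h2 : asc (npow x n) x (inv x) = 1 := by
    rw [skew (inv x) x (npow x n), vP3 x x n, inv_one]
  rw [show npow x (n+1) = npow x n * x from rfl, h, h2, hmul_one]

lemma zp_succ (x : Q) (n : ℤ) : zp x (n + 1) = zp x n * x := by
  cases n with
  | ofNat k =>
      show zp x (Int.ofNat k + 1) = npow x k * x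
      have h : (Int.ofNat k) + 1 = Int.ofNat (k+1) := rfl
      rw [h]; rfl
  | negSucc k =>
      cases k with
      | zero =>
          show zp x (Int.negSucc 0 + 1) = npow (inv x) 1 * x
          have h : Int.negSucc 0 + 1 = 0 := rfl
          rw [h, npow_inv_mul_x x 0]; rfl
      | succ m =>
          show zp x (Int.negSucc (m+1) + 1) = npow (inv x) (m+2) * x
          have h : Int.negSucc (m+1) + 1 = Int.negSucc m := rfl
          rw [h, npow_inv_mul_x x (m+1)]; rfl

lemma zp_pred (x : Q) (n : ℤ) : zp x (n - 1) = zp x n * inv x := by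
  cases n with
  | ofNat k =>
      cases k with
      | zero =>
          show zp x ((0:ℤ) - 1) = npow x 0 * inv x
          have h : (0:ℤ) - 1 = Int.negSucc 0 := rfl
          rw [h]; rfl
      | succ m =>
          show zp x (Int.ofNat (m+1) - 1) = npow x (m+1) * inv x
          have h : Int.ofNat (m+1) - 1 = Int.ofNat m := by
            rw [show Int.ofNat (m+1) = Int.ofNat m + 1 from rfl]; ring
          rw [h, npow_mul_inv x m]; rfl
  | negSucc k =>
      show zp x (Int.negSucc k - 1) = npow (inv x) (k+1) * inv x
      have h : Int.negSucc k - 1 = Int.negSucc (k+1) := by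
        rw [Int.negSucc_eq, Int.negSucc_eq]; push_cast; ring
      rw [h]; rfl

lemma zp_assoc_x (x : Q) (m n : ℤ) : (zp x m * zp x n) * x = zp x m * (zp x n * x) := by
  have h := hasc (zp x m) (zp x n) x
  rw [vR1 x (zp x n) m, hmul_one] at h
  exact h

lemma zp_assoc_i (x : Q) (m n : ℤ) :
    (zp x m * zp x n) * inv x = zp x m * (zp x n * inv x) := by
  have h := hasc (zp x m) (zp x n) (inv x)
  rw [vR2 x (zp x n) m, hmul_one] at h
  exact h

lemma zp_add (x : Q) (m n : ℤ) : zp x m * zp x n = zp x (m + n) := by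
  induction n using Int.induction_on with
  | zero => rw [zp_zero, hmul_one, add_zero]
  | succ i ih =>
      calc zp x m * zp x (i + 1) = zp x m * (zp x i * x) := by rw [zp_succ]
        _ = (zp x m * zp x i) * x := (zp_assoc_x x m i).symm
        _ = zp x (m + i) * x := by rw [ih]
        _ = zp x (m + i + 1) := (zp_succ x (m + i)).symm
        _ = zp x (m + (i + 1)) := congrArg (zp x) (by ring)
  | pred i ih =>
      calc zp x m * zp x (-i - 1) = zp x m * (zp x (-i) * inv x) := by rw [zp_pred]
        _ = (zp x m * zp x (-i)) * inv x := (zp_assoc_i x m (-i)).symm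
        _ = zp x (m + -i) * inv x := by rw [ih]
        _ = zp x (m + -i - 1) := (zp_pred x (m + -i)).symm
        _ = zp x (m + (-i - 1)) := congrArg (zp x) (by ring)

lemma zp_neg (x : Q) (n : ℤ) : zp x (-n) = inv (zp x n) := by
  have h : zp x n * zp x (-n) = 1 := by
    rw [zp_add, show n + -n = 0 from by ring, zp_zero]
  exact inv_unique h

lemma zp_inv (x : Q) (n : ℤ) : zp (inv x) n = zp x (-n) := by
  induction n using Int.induction_on with
  | zero => rfl
  | succ i ih =>
      calc zp (inv x) (i + 1) = zp (inv x) i * inv x := zp_succ _ _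
        _ = zp x (-i) * inv x := by rw [ih]
        _ = zp x (-i - 1) := (zp_pred x (-i)).symm
        _ = zp x (-(i + 1)) := congrArg (zp x) (by ring)
  | pred i ih =>
      calc zp (inv x) (-i - 1) = zp (inv x) (-i) * inv (inv x) := zp_pred _ _
        _ = zp x (-(-(i:ℤ))) * x := by rw [ih, inv_inv]
        _ = zp x (i:ℤ) * x := by rw [show (-(-(i:ℤ))) = (i:ℤ) from by ring]
        _ = zp x ((i:ℤ) + 1) := (zp_succ x i).symm
        _ = zp x (-(-(i:ℤ) - 1)) := congrArg (zp x) (by ring)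

lemma zp_one_base (n : ℤ) : zp (1 : Q) n = 1 := by
  induction n using Int.induction_on with
  | zero => rfl
  | succ i ih => rw [zp_succ, ih, hmul_one]
  | pred i ih => rw [zp_pred, ih, inv_one, hmul_one]

lemma zp_zp (x : Q) (s t : ℤ) : zp (zp x s) t = zp x (s * t) := by
  induction t using Int.induction_on with
  | zero => rw [mul_zero]; rfl
  | succ i ih =>
      calc zp (zp x s) (i + 1) = zp (zp x s) i * zp x s := zp_succ _ _
        _ = zp x (s * i) * zp x s := by rw [ih]
        _ = zp x (s * i + s) := zp_add _ _ _
        _ = zp x (s * (i + 1)) := congrArg (zp x) (by ring)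
  | pred i ih =>
      calc zp (zp x s) (-i - 1) = zp (zp x s) (-i) * inv (zp x s) := zp_pred _ _
        _ = zp x (s * (-i)) * zp x (-s) := by rw [ih, ← zp_neg]
        _ = zp x (s * (-i) + -s) := zp_add _ _ _
        _ = zp x (s * (-i - 1)) := congrArg (zp x) (by ring)

lemma IsC_npow {z : Q} (hz : IsC z) : ∀ n, IsC (npow z n)
  | 0 => IsC.one
  | n+1 => (IsC_npow hz n).mul' hz

lemma IsC_zp {z : Q} (hz : IsC z) (n : ℤ) : IsC (zp z n) := by
  cases n with
  | ofNat k => exact IsC_npow hz k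
  | negSucc k => exact IsC_npow hz.inv' (k+1)

lemma zp_mul_central {k l : Q} (hk : IsC k) (hl : IsC l) (n : ℤ) :
    zp (k * l) n = zp k n * zp l n := by
  induction n using Int.induction_on with
  | zero => exact (hmul_one 1).symm
  | succ i ih =>
      calc zp (k * l) (i + 1) = zp (k * l) i * (k * l) := zp_succ _ _
        _ = (zp k i * zp l i) * (k * l) := by rw [ih]
        _ = (zp k i * k) * (zp l i * l) := swap_mid (IsC_zp hk i) hk _ _
        _ = zp k (i + 1) * zp l (i + 1) := by rw [← zp_succ, ← zp_succ]
  | pred i ih =>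
      calc zp (k * l) (-i - 1) = zp (k * l) (-i) * inv (k * l) := zp_pred _ _
        _ = (zp k (-i) * zp l (-i)) * (inv k * inv l) := by
              rw [ih, inv_distrib hk hl]
        _ = (zp k (-i) * inv k) * (zp l (-i) * inv l) :=
              swap_mid (IsC_zp hk _) hk.inv' _ _
        _ = zp k (-i - 1) * zp l (-i - 1) := by rw [← zp_pred, ← zp_pred]

lemma asc_zp3 (u v x : Q) (n : ℤ) : asc u v (zp x n) = zp (asc u v x) n := by
  induction n using Int.induction_on with
  | zero => rw [zp_zero, asc_one3]; rfl
  | succ i ih =>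
      calc asc u v (zp x (i + 1)) = asc u v (zp x i * x) := by rw [zp_succ]
        _ = asc u v (zp x i) * asc u v x := lin3 u v _ _
        _ = zp (asc u v x) i * asc u v x := by rw [ih]
        _ = zp (asc u v x) (i + 1) := (zp_succ _ _).symm
  | pred i ih =>
      calc asc u v (zp x (-i - 1)) = asc u v (zp x (-i) * inv x) := by rw [zp_pred]
        _ = asc u v (zp x (-i)) * asc u v (inv x) := lin3 u v _ _
        _ = zp (asc u v x) (-i) * inv (asc u v x) := by rw [ih, asc_inv3]
        _ = zp (asc u v x) (-i - 1) := (zp_pred _ _).symm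

lemma asc_zp1 (x v w : Q) (n : ℤ) : asc (zp x n) v w = zp (asc x v w) n := by
  calc asc (zp x n) v w = inv (asc w v (zp x n)) := skew w v (zp x n)
    _ = inv (zp (asc w v x) n) := by rw [asc_zp3]
    _ = zp (asc w v x) (-n) := (zp_neg _ _).symm
    _ = zp (inv (asc w v x)) n := by rw [zp_inv]
    _ = zp (asc x v w) n := by rw [skew w v x]

lemma asc_zp2 (u x w : Q) (n : ℤ) : asc u (zp x n) w = zp (asc u x w) n := by
  calc asc u (zp x n) w = inv (asc (zp x n) w u * asc w u (zp x n)) := jac _ _ _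
    _ = inv (zp (asc x w u) n * zp (asc w u x) n) := by rw [asc_zp1, asc_zp3]
    _ = inv (zp (asc x w u * asc w u x) n) := by
          rw [zp_mul_central (IsC_asc x w u) (IsC_asc w u x)]
    _ = zp (asc x w u * asc w u x) (-n) := (zp_neg _ _).symm
    _ = zp (inv (asc x w u * asc w u x)) n := by rw [zp_inv]
    _ = zp (asc u x w) n := by rw [jac u x w]


lemma keyS2 (a b : Q) (m n p : ℤ) :
    asc (zp a n) (zp a m) (zp b p) = zp (asc a a b) (p * m * n) := by
  rw [asc_zp1, asc_zp2, asc_zp3, zp_zp, zp_zp]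
  exact congrArg (zp (asc a a b)) (by ring)

lemma keyS1 (a b : Q) (m p n q : ℤ) :
    asc (zp a m * zp b p) (zp a n) (zp b q) = zp (asc a a b) (q * n * m) := by
  rw [lin1, keyS2 a b n m q, asc_zp1, asc_zp2, asc_zp3, asc_xyx,
    zp_one_base, zp_one_base, zp_one_base, hmul_one]

lemma keyS3 (a b : Q) (s p q : ℤ) :
    asc (zp a s) (zp b p) (zp b q) = zp (asc a b b) (q * p * s) := by
  rw [asc_zp1, asc_zp2, asc_zp3, zp_zp, zp_zp]
  exact congrArg (zp (asc a b b)) (by ring)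

lemma key (a b : Q) (m p n q : ℤ) :
    (zp a m * zp b p) * (zp a n * zp b q) =
      ((zp a (m + n) * zp b (p + q)) * zp (asc a a b) (-(m * n * (p + q)))) *
        zp (asc a b b) (p * q * (m + n)) := by
  have h2 : (zp a m * zp b p) * zp a n
      = (zp a (n + m) * zp b p) * inv (zp (asc a a b) (p * m * n)) := by
    calc (zp a m * zp b p) * zp a n = zp a n * (zp a m * zp b p) := hcomm _ _
      _ = ((zp a n * zp a m) * zp b p) * inv (asc (zp a n) (zp a m) (zp b p)) :=
            unasc (IsC_asc _ _ _) (hasc _ _ _).symm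
      _ = (zp a (n + m) * zp b p) * inv (zp (asc a a b) (p * m * n)) := by
            rw [zp_add, keyS2]
  have h3 : (zp a (n + m) * zp b p) * zp b q
      = (zp a (n + m) * zp b (p + q)) * zp (asc a b b) (q * p * (n + m)) := by
    calc (zp a (n + m) * zp b p) * zp b q
        = (zp a (n + m) * (zp b p * zp b q)) * asc (zp a (n + m)) (zp b p) (zp b q) :=
          hasc _ _ _
      _ = (zp a (n + m) * zp b (p + q)) * zp (asc a b b) (q * p * (n + m)) := by
          rw [zp_add, keyS3]
  calc (zp a m * zp b p) * (zp a n * zp b q)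
      = (((zp a m * zp b p) * zp a n) * zp b q) *
          inv (asc (zp a m * zp b p) (zp a n) (zp b q)) :=
        unasc (IsC_asc _ _ _) (hasc _ _ _).symm
    _ = ((((zp a (n + m) * zp b p) * inv (zp (asc a a b) (p * m * n))) * zp b q)) *
          inv (zp (asc a a b) (q * n * m)) := by rw [h2, keyS1]
    _ = ((((zp a (n + m) * zp b p) * zp b q) * inv (zp (asc a a b) (p * m * n)))) *
          inv (zp (asc a a b) (q * n * m)) := by
          rw [((IsC_zp (IsC_asc a a b) (p * m * n)).inv').pull]
    _ = (((zp a (n + m) * zp b (p + q)) * zp (asc a b b) (q * p * (n + m))) *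
          inv (zp (asc a a b) (p * m * n))) * inv (zp (asc a a b) (q * n * m)) := by
          rw [h3]
    _ = ((zp a (n + m) * zp b (p + q)) *
          (inv (zp (asc a a b) (p * m * n)) * inv (zp (asc a a b) (q * n * m)))) *
          zp (asc a b b) (q * p * (n + m)) := by
          rw [(IsC_zp (IsC_asc a b b) (q * p * (n + m))).pull,
            (IsC_zp (IsC_asc a b b) (q * p * (n + m))).pull,
            ((IsC_zp (IsC_asc a a b) (p * m * n)).inv').merge]
    _ = ((zp a (n + m) * zp b (p + q)) *
          (zp (asc a a b) (-(p * m * n)) * zp (asc a a b) (-(q * n * m)))) *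
          zp (asc a b b) (q * p * (n + m)) := by rw [← zp_neg, ← zp_neg]
    _ = ((zp a (n + m) * zp b (p + q)) *
          zp (asc a a b) (-(p * m * n) + -(q * n * m))) *
          zp (asc a b b) (q * p * (n + m)) := by rw [zp_add]
    _ = ((zp a (m + n) * zp b (p + q)) * zp (asc a a b) (-(m * n * (p + q)))) *
          zp (asc a b b) (p * q * (m + n)) := by
          rw [show n + m = m + n from by ring,
            show (-(p * m * n) + -(q * n * m) : ℤ) = -(m * n * (p + q)) from by ring,
            show (q * p * (m + n) : ℤ) = p * q * (m + n) from by ring]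

def phi (a b : Q) (u : ℤ × ℤ × ℤ × ℤ) : Q :=
  ((zp a u.1 * zp b u.2.1) * zp (asc a a b) u.2.2.1) * zp (asc a b b) u.2.2.2

lemma collect {k1 l1 k2 l2 : Q} (hk1 : IsC k1) (hl1 : IsC l1) (Y : Q) :
    (((Y * k1) * l1) * k2) * l2 = (Y * (k1 * k2)) * (l1 * l2) := by
  rw [hl1.pull (Y * k1) k2, hk1.merge Y k2, hl1.merge (Y * (k1 * k2)) l2]

lemma phi_a (a b : Q) : phi a b (1, 0, 0, 0) = a := by
  show ((zp a 1 * zp b 0) * zp (asc a a b) 0) * zp (asc a b b) 0 = a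
  rw [zp_one', zp_zero, zp_zero, zp_zero, hmul_one, hmul_one, hmul_one]

lemma phi_b (a b : Q) : phi a b (0, 1, 0, 0) = b := by
  show ((zp a 0 * zp b 1) * zp (asc a a b) 0) * zp (asc a b b) 0 = b
  rw [zp_one', zp_zero, zp_zero, zp_zero, hone_mul, hmul_one, hmul_one]

lemma phi_hom (a b : Q) (u v : ℤ × ℤ × ℤ × ℤ) :
    phi a b (hatMul u v) = phi a b (u) * phi a b (v) := by
  obtain ⟨m, p, s, t⟩ := u
  obtain ⟨n, q, s', t'⟩ := v
  have hc := IsC_asc a a b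
  have hd := IsC_asc a b b
  show ((zp a (m + n) * zp b (p + q)) * zp (asc a a b) (s + s' - m * n * (p + q))) *
        zp (asc a b b) (t + t' + p * q * (m + n))
      = (((zp a m * zp b p) * zp (asc a a b) s) * zp (asc a b b) t) *
        (((zp a n * zp b q) * zp (asc a a b) s') * zp (asc a b b) t')
  symm
  rw [(IsC_zp hd t').pullr, (IsC_zp hc s').pullr, (IsC_zp hd t).pull,
    (IsC_zp hc s).pull, key a b m p n q,
    collect (IsC_zp hc (-(m * n * (p + q)))) (IsC_zp hd (p * q * (m + n))),
    collect ((IsC_zp hc (-(m * n * (p + q)))).mul' (IsC_zp hc s))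
      ((IsC_zp hd (p * q * (m + n))).mul' (IsC_zp hd t)),
    zp_add, zp_add, zp_add, zp_add,
    show (-(m * n * (p + q)) + s + s' : ℤ) = s + s' - m * n * (p + q) from by ring,
    show (p * q * (m + n) + t + t' : ℤ) = t + t' + p * q * (m + n) from by ring]


lemma psi_eq (a b : Q) (ψ : ℤ × ℤ × ℤ × ℤ → Q)
    (hm : ∀ u v, ψ (hatMul u v) = ψ u * ψ v)
    (ha : ψ (1, 0, 0, 0) = a) (hb : ψ (0, 1, 0, 0) = b) :
    ψ = phi a b := by
  have hψ0 : ψ (0, 0, 0, 0) = 1 := by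
    have h := hm (0, 0, 0, 0) (0, 0, 0, 0)
    rw [show hatMul (0, 0, 0, 0) (0, 0, 0, 0) = ((0, 0, 0, 0) : ℤ × ℤ × ℤ × ℤ)
      from by decide] at h
    exact eq_one_of h.symm
  have hψa : ∀ n : ℤ, ψ (n, 0, 0, 0) = zp a n := by
    intro n
    induction n using Int.induction_on with
    | zero => exact hψ0
    | succ i ih =>
        have h := hm ((i : ℤ), 0, 0, 0) (1, 0, 0, 0)
        rw [show hatMul ((i : ℤ), 0, 0, 0) (1, 0, 0, 0) = (((i : ℤ) + 1), 0, 0, 0)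
          from by simp [hatMul], ha, ih] at h
        rw [h, ← zp_succ]
    | pred i ih =>
        have h := hm ((-(i : ℤ) - 1), 0, 0, 0) (1, 0, 0, 0)
        rw [show hatMul ((-(i : ℤ) - 1), 0, 0, 0) (1, 0, 0, 0) = ((-(i : ℤ)), 0, 0, 0)
          from by simp [hatMul], ha, ih] at h
        have e1 : zp a (-(i : ℤ)) = zp a (-(i : ℤ) - 1) * a := by
          rw [← zp_succ]; exact congrArg (zp a) (by ring)
        rw [e1] at h
        exact (cancelr h).symm
  have hψb : ∀ n : ℤ, ψ (0, n, 0, 0) = zp b n := by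
    intro n
    induction n using Int.induction_on with
    | zero => exact hψ0
    | succ i ih =>
        have h := hm (0, (i : ℤ), 0, 0) (0, 1, 0, 0)
        rw [show hatMul (0, (i : ℤ), 0, 0) (0, 1, 0, 0) = (0, ((i : ℤ) + 1), 0, 0)
          from by simp [hatMul], hb, ih] at h
        rw [h, ← zp_succ]
    | pred i ih =>
        have h := hm (0, (-(i : ℤ) - 1), 0, 0) (0, 1, 0, 0)
        rw [show hatMul (0, (-(i : ℤ) - 1), 0, 0) (0, 1, 0, 0) = (0, (-(i : ℤ)), 0, 0)
          from by simp [hatMul], hb, ih] at h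
        have e1 : zp b (-(i : ℤ)) = zp b (-(i : ℤ) - 1) * b := by
          rw [← zp_succ]; exact congrArg (zp b) (by ring)
        rw [e1] at h
        exact (cancelr h).symm
  have hψc1 : ψ (0, 0, 1, 0) = asc a a b := by
    have E : hatMul (hatMul (1, 0, 0, 0) (1, 0, 0, 0)) (0, 1, 0, 0)
        = hatMul (hatMul (1, 0, 0, 0) (hatMul (1, 0, 0, 0) (0, 1, 0, 0))) (0, 0, 1, 0) := by
      decide
    have h1 : ψ (hatMul (hatMul (1, 0, 0, 0) (1, 0, 0, 0)) (0, 1, 0, 0)) = (a * a) * b := by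
      rw [hm, hm, ha, hb]
    have h2 : ψ (hatMul (hatMul (1, 0, 0, 0) (hatMul (1, 0, 0, 0) (0, 1, 0, 0))) (0, 0, 1, 0))
        = (a * (a * b)) * ψ (0, 0, 1, 0) := by
      rw [hm, hm, hm, ha, hb]
    rw [E] at h1
    exact cancel (h2.symm.trans (h1.trans (hasc a a b)))
  have hψd1 : ψ (0, 0, 0, 1) = asc a b b := by
    have E : hatMul (hatMul (1, 0, 0, 0) (0, 1, 0, 0)) (0, 1, 0, 0)
        = hatMul (hatMul (1, 0, 0, 0) (hatMul (0, 1, 0, 0) (0, 1, 0, 0))) (0, 0, 0, 1) := by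
      decide
    have h1 : ψ (hatMul (hatMul (1, 0, 0, 0) (0, 1, 0, 0)) (0, 1, 0, 0)) = (a * b) * b := by
      rw [hm, hm, ha, hb]
    have h2 : ψ (hatMul (hatMul (1, 0, 0, 0) (hatMul (0, 1, 0, 0) (0, 1, 0, 0))) (0, 0, 0, 1))
        = (a * (b * b)) * ψ (0, 0, 0, 1) := by
      rw [hm, hm, hm, ha, hb]
    rw [E] at h1
    exact cancel (h2.symm.trans (h1.trans (hasc a b b)))
  have hψc : ∀ n : ℤ, ψ (0, 0, n, 0) = zp (asc a a b) n := by
    intro n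
    induction n using Int.induction_on with
    | zero => exact hψ0
    | succ i ih =>
        have h := hm (0, 0, (i : ℤ), 0) (0, 0, 1, 0)
        rw [show hatMul (0, 0, (i : ℤ), 0) (0, 0, 1, 0) = (0, 0, ((i : ℤ) + 1), 0)
          from by simp [hatMul], hψc1, ih] at h
        rw [h, ← zp_succ]
    | pred i ih =>
        have h := hm (0, 0, (-(i : ℤ) - 1), 0) (0, 0, 1, 0)
        rw [show hatMul (0, 0, (-(i : ℤ) - 1), 0) (0, 0, 1, 0) = (0, 0, (-(i : ℤ)), 0)
          from by simp [hatMul], hψc1, ih] at h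
        have e1 : zp (asc a a b) (-(i : ℤ)) = zp (asc a a b) (-(i : ℤ) - 1) * asc a a b := by
          rw [← zp_succ]; exact congrArg (zp (asc a a b)) (by ring)
        rw [e1] at h
        exact (cancelr h).symm
  have hψd : ∀ n : ℤ, ψ (0, 0, 0, n) = zp (asc a b b) n := by
    intro n
    induction n using Int.induction_on with
    | zero => exact hψ0
    | succ i ih =>
        have h := hm (0, 0, 0, (i : ℤ)) (0, 0, 0, 1)
        rw [show hatMul (0, 0, 0, (i : ℤ)) (0, 0, 0, 1) = (0, 0, 0, ((i : ℤ) + 1))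
          from by simp [hatMul], hψd1, ih] at h
        rw [h, ← zp_succ]
    | pred i ih =>
        have h := hm (0, 0, 0, (-(i : ℤ) - 1)) (0, 0, 0, 1)
        rw [show hatMul (0, 0, 0, (-(i : ℤ) - 1)) (0, 0, 0, 1) = (0, 0, 0, (-(i : ℤ)))
          from by simp [hatMul], hψd1, ih] at h
        have e1 : zp (asc a b b) (-(i : ℤ)) = zp (asc a b b) (-(i : ℤ) - 1) * asc a b b := by
          rw [← zp_succ]; exact congrArg (zp (asc a b b)) (by ring)
        rw [e1] at h
        exact (cancelr h).symm
  funext u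
  obtain ⟨u1, u2, u3, u4⟩ := u
  have d1 : ((u1, u2, u3, u4) : ℤ × ℤ × ℤ × ℤ)
      = hatMul (hatMul (hatMul (u1, 0, 0, 0) (0, u2, 0, 0)) (0, 0, u3, 0)) (0, 0, 0, u4) := by
    simp [hatMul]
  have h := congrArg ψ d1
  rw [hm, hm, hm, hψa u1, hψb u2, hψc u3, hψd u4] at h
  exact h

end CAL

/-- `F̂` is the free commutative automorphic loop of nilpotency class two on two
generators: for any commutative loop `Q` satisfying identity (A) whose associators are
all central, and any `a, b ∈ Q`, there is a unique multiplication-preserving map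
`φ : F̂ → Q` with `φ(1,0,0,0) = a` and `φ(0,1,0,0) = b`. -/
theorem stmt_7 {Q : Type*} (mul : Q → Q → Q) (one : Q) (ld : Q → Q → Q)
    (h_one_mul : ∀ a, mul one a = a)
    (h_mul_one : ∀ a, mul a one = a)
    (h_comm : ∀ a b, mul a b = mul b a)
    (h_mul_ld : ∀ a b, mul a (ld a b) = b)
    (h_ld_mul : ∀ a b, ld a (mul a b) = b)
    (h_A : ∀ x y a b, ld (mul y x) (mul y (mul x (mul a b))) =
        mul (ld (mul y x) (mul y (mul x a))) (ld (mul y x) (mul y (mul x b))))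
    (asc : Q → Q → Q → Q)
    (h_asc : ∀ a b c, mul (mul a b) c = mul (mul a (mul b c)) (asc a b c))
    (h_asc_central : ∀ a b c u v,
      mul (asc a b c) u = mul u (asc a b c) ∧
      mul (mul (asc a b c) u) v = mul (asc a b c) (mul u v) ∧
      mul (mul u (asc a b c)) v = mul u (mul (asc a b c) v) ∧
      mul (mul u v) (asc a b c) = mul u (mul v (asc a b c)))
    (a b : Q) :
    ∃! φ : ℤ × ℤ × ℤ × ℤ → Q,
      (∀ u v, φ (hatMul u v) = mul (φ u) (φ v)) ∧
      φ (1, 0, 0, 0) = a ∧ φ (0, 1, 0, 0) = b := by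
  letI inst : CAL Q :=
    { mul := mul, one := one, ld := ld, asc := asc,
      hone_mul := h_one_mul, hmul_one := h_mul_one, hcomm := h_comm,
      hmul_ld := h_mul_ld, hld_mul := h_ld_mul, hA := h_A, hasc := h_asc,
      hcen := fun a b c u v => (h_asc_central a b c u v).2.1 }
  refine ⟨CAL.phi a b, ⟨fun u v => CAL.phi_hom a b u v, CAL.phi_a a b, CAL.phi_b a b⟩, ?_⟩
  rintro ψ ⟨hmψ, haψ, hbψ⟩
  exact CAL.psi_eq a b ψ hmψ haψ hbψ
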